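/- Let r > 0, a > 0, and 0 < b < a^{−1/r}·(1+r)^{−(1+r)/r}. Let {u_k} be a sequence of nonnegative reals satisfying u_{k+1} ≤ u_k − a·u_k^{1+r} + b for each k ∈ ℕ. Then there exists τ ∈ (0,1) such that u_{k+1} ≤ u_1·τ^k + (b/a)^{1/(1+r)} for each k ∈ ℕ. -/

import Mathlib

theorem stmt2 (r a b : ℝ) (hr : 0 < r) (ha : 0 < a) (hb : 0 < b)
    (hb2 : b < a ^ (-(1 / r)) * (1 + r) ^ (-((1 + r) / r)))
    (u : ℕ → ℝ) (hu : ∀ k, 0 ≤ u k)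
    (hrec : ∀ k : ℕ, 1 ≤ k → u (k + 1) ≤ u k - a * u k ^ (1 + r) + b) :
    ∃ τ : ℝ, τ ∈ Set.Ioo (0 : ℝ) 1 ∧
      ∀ k : ℕ, 1 ≤ k → u (k + 1) ≤ u 1 * τ ^ k + (b / a) ^ (1 / (1 + r)) := by
  have h1r : (0:ℝ) < 1 + r := by linarith
  have hba : 0 < b / a := div_pos hb ha
  set c : ℝ := (b / a) ^ (1 / (1 + r)) with hc
  have hcpos : 0 < c := Real.rpow_pos_of_pos hba _
  have hcr : c ^ (1 + r) = b / a := by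
    rw [hc, ← Real.rpow_mul hba.le, one_div_mul_cancel h1r.ne', Real.rpow_one]
  have hcc : c ^ (1 + r) = c * c ^ r := by
    rw [Real.rpow_add hcpos, Real.rpow_one]
  have hcrpos : 0 < c ^ r := Real.rpow_pos_of_pos hcpos _
  set τ : ℝ := 1 - a * (1 + r) * c ^ r with hτ
  have hτ1 : τ < 1 := by
    have h0 : 0 < a * (1 + r) * c ^ r := by positivity
    rw [hτ]; linarith
  have hτ0 : 0 < τ := by
    have hA : 0 < a * (1 + r) := by positivity
    have h1 : b / a < (a * (1 + r)) ^ (-((1 + r) / r)) := by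
      rw [Real.mul_rpow ha.le h1r.le, div_lt_iff₀ ha]
      calc b < a ^ (-(1 / r)) * (1 + r) ^ (-((1 + r) / r)) := hb2
        _ = a ^ (-((1 + r) / r)) * (1 + r) ^ (-((1 + r) / r)) * a := by
            have he : a ^ (-(1 / r)) = a ^ (-((1 + r) / r)) * a := by
              have h2 : -(1 / r) = -((1 + r) / r) + 1 := by field_simp; ring
              rw [h2, Real.rpow_add ha, Real.rpow_one]
            rw [he]; ring
    have h2 : c ^ r < (a * (1 + r))⁻¹ := by
      have := Real.rpow_lt_rpow hba.le h1 (by positivity : (0:ℝ) < r / (1 + r))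
      rw [← Real.rpow_mul hA.le] at this
      have he : -((1 + r) / r) * (r / (1 + r)) = -1 := by
        field_simp
      rw [he, Real.rpow_neg_one] at this
      calc c ^ r = (b / a) ^ (r / (1 + r)) := by
            rw [hc, ← Real.rpow_mul hba.le]
            congr 1
            field_simp
        _ < (a * (1 + r))⁻¹ := this
    have h3 : a * (1 + r) * c ^ r < 1 := by
      have := (mul_lt_mul_of_pos_left h2 hA)
      rwa [mul_inv_cancel₀ hA.ne'] at this
    rw [hτ]; linarith
  have hstep : ∀ k : ℕ, 1 ≤ k → u (k + 1) - c ≤ τ * (u k - c) := by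
    intro k hk
    have hB : 1 + (1 + r) * ((u k - c) / c) ≤ (1 + (u k - c) / c) ^ (1 + r) := by
      apply one_add_mul_self_le_rpow_one_add
      · rw [neg_le, ← neg_div, div_le_one hcpos]
        linarith [hu k]
      · linarith
    have heq : 1 + (u k - c) / c = u k / c := by field_simp; ring
    rw [heq, Real.div_rpow (hu k) hcpos.le] at hB
    have hB2 : c ^ (1 + r) * (1 + (1 + r) * ((u k - c) / c)) ≤ u k ^ (1 + r) := by
      exact (le_div_iff₀' (by positivity : (0:ℝ) < c ^ (1 + r))).mp hB
    have hkey : c ^ (1 + r) * ((u k - c) / c) = c ^ r * (u k - c) := by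
      rw [hcc]; field_simp
    have hac : a * c ^ (1 + r) = b := by
      rw [hcr]; field_simp
    have hrec' := hrec k hk
    have hmul : a * (c ^ (1 + r) * (1 + (1 + r) * ((u k - c) / c))) ≤ a * u k ^ (1 + r) :=
      mul_le_mul_of_nonneg_left hB2 ha.le
    have hexp : a * (c ^ (1 + r) * (1 + (1 + r) * ((u k - c) / c)))
        = b + a * (1 + r) * (c ^ r * (u k - c)) := by
      have : c ^ (1 + r) * (1 + (1 + r) * ((u k - c) / c))
          = c ^ (1 + r) + (1 + r) * (c ^ (1 + r) * ((u k - c) / c)) := by ring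
      rw [this, hkey, mul_add, ← mul_assoc, hac]
    rw [hexp] at hmul
    rw [hτ]
    nlinarith
  refine ⟨τ, ⟨hτ0, hτ1⟩, ?_⟩
  have main : ∀ k : ℕ, 1 ≤ k → u (k + 1) - c ≤ τ ^ k * (u 1 - c) := by
    intro k hk
    induction k with
    | zero => omega
    | succ n ih =>
      rcases Nat.lt_or_ge 1 (n + 1) with h | h
      · have hn : 1 ≤ n := by omega
        have := hstep (n + 1) (by omega)
        calc u (n + 1 + 1) - c ≤ τ * (u (n + 1) - c) := this
          _ ≤ τ * (τ ^ n * (u 1 - c)) :=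
              mul_le_mul_of_nonneg_left (ih hn) hτ0.le
          _ = τ ^ (n + 1) * (u 1 - c) := by ring
      · have hn0 : n = 0 := by omega
        subst hn0
        simpa using hstep 1 le_rfl
  intro k hk
  have := main k hk
  have hpk : 0 < τ ^ k := pow_pos hτ0 k
  nlinarith
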